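/- Fix real numbers P_p > 0, λ_p > 0, σ > 0, λ_s > 0, α > 2 and an integer N ≥ 2. For ρ > 0 set p = exp(−λ_s π ρ²/N), q = 1 − p, S = Σ_{M=1}^{N} (N/M)² C(N−1, M−1) p^{N−M} q^{M}, and define V(ρ) = λ_p P_p² σ² π [ (α/(α−1) − ρ²) p^N + ((p/q) ρ² + α/(α−1)) S ] if 0 < ρ ≤ 1 and V(ρ) = λ_p P_p² σ² π [ ρ^{2−2α} p^N/(α−1) + ((α − ρ^{2−2α})/((α−1) q) + ρ^{2−2α}/(α−1)) S ] if ρ > 1. Then for every ρ ∈ (0, ∞), V(ρ) > λ_p P_p² σ² π α/(α−1). (Corollary 3: the variance of the received power under AD-WPT strictly exceeds that under omnidirectional WPT.) -/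

import Mathlib

lemma choose_cast_id (N M : ℕ) (h1 : 1 ≤ M) (hMN : M ≤ N) :
    ((N:ℝ)/M)^2 * ((N-1).choose (M-1) : ℝ) = ((N:ℝ)/M) * (N.choose M : ℝ) := by
  have hM : (M:ℝ) ≠ 0 := by positivity
  have hid : N * (N-1).choose (M-1) = N.choose M * M := by
    obtain ⟨n, rfl⟩ : ∃ n, N = n + 1 := ⟨N-1, by omega⟩
    obtain ⟨m, rfl⟩ : ∃ m, M = m + 1 := ⟨M-1, by omega⟩
    simpa using (Nat.add_one_mul_choose_eq n m)
  have hr : (N:ℝ) * ((N-1).choose (M-1) : ℝ) = (N.choose M : ℝ) * M := by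
    exact_mod_cast congrArg (Nat.cast : ℕ → ℝ) hid
  field_simp
  linear_combination (N:ℝ)*hr

lemma S_gt (N : ℕ) (hN : 2 ≤ N) (p : ℝ) (hp0 : 0 < p) (hp1 : p < 1) :
    1 - p^N < ∑ M ∈ Finset.Icc 1 N,
      ((N : ℝ) / (M : ℝ)) ^ 2 * (Nat.choose (N - 1) (M - 1) : ℝ) * p ^ (N - M) * (1-p) ^ M := by
  have hq : 0 < 1 - p := by linarith
  have hbinom : ∑ M ∈ Finset.Icc 1 N, (N.choose M : ℝ) * p^(N-M) * (1-p)^M = 1 - p^N := by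
    have h1 : ((1-p) + p)^N = ∑ k ∈ Finset.range (N+1), (1-p)^k * p^(N-k) * (N.choose k) := by
      exact add_pow (1-p) p N
    rw [← Finset.Ico_add_one_right_eq_Icc, Finset.sum_Ico_eq_sum_range]
    have h2 := Finset.sum_range_succ' (fun k => (1-p)^k * p^(N-k) * (N.choose k)) N
    simp only [sub_add_cancel, one_pow, pow_zero, Nat.sub_zero, Nat.choose_zero_right,
      Nat.cast_one, mul_one, one_mul] at h1 h2
    have h3 : ∑ i ∈ Finset.range (N+1-1), (N.choose (1+i) : ℝ) * p^(N-(1+i)) * (1-p)^(1+i)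
        = ∑ i ∈ Finset.range N, (1-p)^(i+1) * p^(N-(i+1)) * (N.choose (i+1)) := by
      simp only [Nat.add_sub_cancel]
      refine Finset.sum_congr rfl fun i _ => by rw [add_comm 1 i]; ring
    rw [h3]
    linarith [h1, h2]
  have hlt : ∑ M ∈ Finset.Icc 1 N, (N.choose M : ℝ) * p^(N-M) * (1-p)^M <
      ∑ M ∈ Finset.Icc 1 N,
        ((N : ℝ) / (M : ℝ)) ^ 2 * (Nat.choose (N - 1) (M - 1) : ℝ) * p ^ (N - M) * (1-p) ^ M := by
    apply Finset.sum_lt_sum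
    · intro M hM
      simp only [Finset.mem_Icc] at hM
      have hM1 : 1 ≤ M := hM.1
      have hMN : M ≤ N := hM.2
      rw [choose_cast_id N M hM1 hMN]
      have hNM : (1:ℝ) ≤ (N:ℝ)/M := by
        rw [le_div_iff₀ (by positivity)]
        exact_mod_cast by simpa using hMN
      have hg : (0:ℝ) ≤ (N.choose M : ℝ) * p^(N-M) * (1-p)^M := by positivity
      nlinarith [hg, hNM]
    · refine ⟨1, by simp [Finset.mem_Icc]; omega, ?_⟩
      rw [choose_cast_id N 1 le_rfl (by omega)]
      have hg : (0:ℝ) < (N.choose 1 : ℝ) * p^(N-1) * (1-p)^1 := by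
        have : 0 < (N.choose 1 : ℝ) := by simp [Nat.choose_one_right]; positivity
        positivity
      have hN1 : (1:ℝ) < (N:ℝ)/1 := by
        simp; exact_mod_cast by omega
      nlinarith [hg, hN1]
  linarith

theorem stmt_13 (Pp lp σ ls α : ℝ) (N : ℕ)
    (hPp : 0 < Pp) (hlp : 0 < lp) (hσ : 0 < σ) (hls : 0 < ls) (hα : 2 < α) (hN : 2 ≤ N) :
    ∀ ρ : ℝ, 0 < ρ →
      (let p : ℝ := Real.exp (-(ls * Real.pi * ρ ^ 2 / N));
       let q : ℝ := 1 - p;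
       let S : ℝ := ∑ M ∈ Finset.Icc 1 N,
          ((N : ℝ) / (M : ℝ)) ^ 2 * (Nat.choose (N - 1) (M - 1) : ℝ) * p ^ (N - M) * q ^ M;
        if ρ ≤ 1 then
          lp * Pp ^ 2 * σ ^ 2 * Real.pi *
            ((α / (α - 1) - ρ ^ 2) * p ^ N + ((p / q) * ρ ^ 2 + α / (α - 1)) * S)
        else
          lp * Pp ^ 2 * σ ^ 2 * Real.pi *
            (ρ ^ (2 - 2 * α) * p ^ N / (α - 1) +
              ((α - ρ ^ (2 - 2 * α)) / ((α - 1) * q) + ρ ^ (2 - 2 * α) / (α - 1)) * S))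
        > lp * Pp ^ 2 * σ ^ 2 * Real.pi * α / (α - 1) := by
  intro ρ hρ
  have hπ : (0:ℝ) < Real.pi := Real.pi_pos
  have hK : 0 < lp * Pp ^ 2 * σ ^ 2 * Real.pi := by positivity
  set K := lp * Pp ^ 2 * σ ^ 2 * Real.pi with hKdef
  set p : ℝ := Real.exp (-(ls * Real.pi * ρ ^ 2 / N)) with hpdef
  have hp0 : 0 < p := Real.exp_pos _
  have hNR : (0:ℝ) < N := by exact_mod_cast (by omega : 0 < N)
  have hp1 : p < 1 := by
    rw [hpdef, Real.exp_lt_one_iff]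
    have : 0 < ls * Real.pi * ρ ^ 2 / N := by positivity
    linarith
  set q : ℝ := 1 - p with hqdef
  have hq : 0 < q := by simp [hqdef]; linarith
  set S : ℝ := ∑ M ∈ Finset.Icc 1 N,
      ((N : ℝ) / (M : ℝ)) ^ 2 * (Nat.choose (N - 1) (M - 1) : ℝ) * p ^ (N - M) * q ^ M with hSdef
  have hS : 1 - p ^ N < S := by rw [hSdef, hqdef]; exact S_gt N hN p hp0 hp1
  have hα1 : (0:ℝ) < α - 1 := by linarith
  have hpN : p ^ N < p := by
    calc p ^ N < p ^ 1 := pow_lt_pow_right_of_lt_one₀ hp0 hp1 (by omega)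
    _ = p := pow_one p
  have hpNpos : 0 < p ^ N := pow_pos hp0 N
  have hA : lp * Pp ^ 2 * σ ^ 2 * Real.pi * α / (α - 1) = K * (α / (α - 1)) := by
    rw [hKdef]; ring
  rw [hA]
  by_cases hρ1 : ρ ≤ 1
  · rw [if_pos hρ1]
    rw [gt_iff_lt, mul_lt_mul_iff_right₀ hK]
    have hCpos : 0 < (p / q) * ρ ^ 2 + α / (α - 1) := by positivity
    have h1 : ((p / q) * ρ ^ 2 + α / (α - 1)) * (1 - p ^ N) <
        ((p / q) * ρ ^ 2 + α / (α - 1)) * S := by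
      exact mul_lt_mul_of_pos_left hS hCpos
    have hD : 0 ≤ (p / q) * (1 - p ^ N) - p ^ N := by
      rw [sub_nonneg, div_mul_eq_mul_div, le_div_iff₀ hq]
      nlinarith [hpN]
    have h2 : (α / (α - 1) - ρ ^ 2) * p ^ N + ((p / q) * ρ ^ 2 + α / (α - 1)) * (1 - p ^ N)
        = α / (α - 1) + ρ ^ 2 * ((p / q) * (1 - p ^ N) - p ^ N) := by ring
    nlinarith [mul_nonneg (sq_nonneg ρ) hD, h1]
  · rw [if_neg hρ1]
    push_neg at hρ1
    set t : ℝ := ρ ^ (2 - 2 * α) with htdef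
    have ht0 : 0 < t := Real.rpow_pos_of_pos hρ _
    have ht1 : t < 1 := by
      rw [htdef]
      exact Real.rpow_lt_one_of_one_lt_of_neg hρ1 (by linarith)
    have hαt : 0 < α - t := by linarith
    rw [gt_iff_lt, mul_lt_mul_iff_right₀ hK]
    have hCpos : 0 < (α - t) / ((α - 1) * q) + t / (α - 1) := by positivity
    have h1 : ((α - t) / ((α - 1) * q) + t / (α - 1)) * (1 - p ^ N) <
        ((α - t) / ((α - 1) * q) + t / (α - 1)) * S :=
      mul_lt_mul_of_pos_left hS hCpos
    have hkey : 0 < (α - t) * (p - p ^ N) := mul_pos hαt (by linarith)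
    have h2 : t * p ^ N / (α - 1) + ((α - t) / ((α - 1) * q) + t / (α - 1)) * (1 - p ^ N)
        - α / (α - 1) = ((α - t) * (p - p ^ N)) / ((α - 1) * q) := by
      field_simp
      ring
    have h3 : 0 < ((α - t) * (p - p ^ N)) / ((α - 1) * q) := by positivity
    linarith [h1, h2, h3]
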